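/- Let k be a field of characteristic p > 0, let φ : k → k be the Frobenius map x ↦ x^p, and let R ∈ k^N be a vector such that the N vectors R, φ(R), ..., φ^{N-1}(R) (Frobenius applied coordinatewise) form a basis of k^N over k. Then for every nonzero vector v ∈ F_p^N (viewed inside k^N), the dot product R · v is nonzero. -/

import Mathlib

/-- Let `k` have characteristic `p > 0` and let `R ∈ k^N` be a vector whose Frobenius
twists `R, φ(R), …, φ^{N-1}(R)` (coordinatewise `x ↦ x^p`) form a `k`-basis of `k^N`.
Then for every nonzero `𝔽_p`-rational vector `v`, the dot product `R · v` is nonzero. -/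
theorem dotProduct_ne_zero_of_frobenius_basis
    (p : ℕ) [Fact p.Prime] (k : Type*) [Field k] [CharP k p] (N : ℕ)
    (R : Fin N → k)
    (hli : LinearIndependent k (fun i : Fin N => fun j : Fin N => R j ^ p ^ (i : ℕ)))
    (hsp : Submodule.span k
        (Set.range (fun i : Fin N => fun j : Fin N => R j ^ p ^ (i : ℕ))) = ⊤) :
    ∀ v : Fin N → ZMod p, v ≠ 0 →
      (∑ j : Fin N, R j * (ZMod.castHom (dvd_refl p) k) (v j)) ≠ 0 := by
  intro v hv h
  set w : Fin N → k := fun j => (ZMod.castHom (dvd_refl p) k) (v j) with hw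
  -- every Frobenius twist of R is orthogonal to w
  have hrow : ∀ i : Fin N, ∑ j, R j ^ p ^ (i : ℕ) * w j = 0 := by
    intro i
    have h2 := congrArg (· ^ p ^ (i : ℕ)) h
    simp only [sum_pow_char_pow, mul_pow] at h2
    have hwfix : ∀ j, w j ^ p ^ (i : ℕ) = w j := by
      intro j
      simp only [hw]
      rw [← map_pow, ZMod.pow_card_pow]
    simp only [hw] at hwfix ⊢
    simp only [hwfix] at h2
    simpa [zero_pow (pow_ne_zero _ (Fact.out (p := p.Prime)).ne_zero)] using h2
  -- hence w is orthogonal to everything in the span, i.e. to all of k^N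
  have key : ∀ x ∈ Submodule.span k
      (Set.range (fun i : Fin N => fun j : Fin N => R j ^ p ^ (i : ℕ))),
      ∑ j, x j * w j = 0 := by
    intro x hx
    induction hx using Submodule.span_induction with
    | mem x hx =>
      obtain ⟨i, rfl⟩ := hx
      exact hrow i
    | zero => simp
    | add x y _ _ hx hy => simp [add_mul, Finset.sum_add_distrib, hx, hy]
    | smul c x _ hx =>
      simp only [Pi.smul_apply, smul_eq_mul, mul_assoc, ← Finset.mul_sum, hx, mul_zero]
  have hw0 : ∀ j, w j = 0 := by
    intro j
    have := key (Pi.single j 1) (hsp ▸ Submodule.mem_top)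
    simpa [Pi.single_apply, Finset.sum_ite_eq'] using this
  obtain ⟨j, hj⟩ := Function.ne_iff.mp hv
  exact hj ((ZMod.castHom (dvd_refl p) k).injective (by simpa [hw] using hw0 j))
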